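/- Let d be a natural number such that x^2 - d*y^2 = -1 has an integer solution. Then d is a sum of two squares. -/
import Mathlib

theorem negPell_sum_of_two_squares (d : ℕ)
    (h : ∃ x y : ℤ, x^2 - (d : ℤ)*y^2 = -1) :
    ∃ a b : ℕ, d = a^2 + b^2 := by
  obtain ⟨x, y, hxy⟩ := h
  have hsq : IsSquare (-1 : ZMod d) := by
    refine ⟨(x : ZMod d), ?_⟩
    have := congrArg (Int.cast : ℤ → ZMod d) hxy
    push_cast at this
    rw [ZMod.natCast_self] at this
    rw [← this]
    ring
  obtain ⟨a, b, hab⟩ := Nat.eq_sq_add_sq_of_isSquare_mod_neg_one hsq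
  exact ⟨a, b, hab⟩
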